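/- With σ_n and v_n(x) defined as above (α < q₀ case), the set X = {x ∈ ℝ : v_n(x) > 0 for all n ≥ 1} is a closed infinite interval [x₊, ∞), and its infimum x₊ satisfies 1 ≤ x₊ < x₀, where x₀ = 1/(2√(q₀(1-q₀))). -/

import Mathlib

noncomputable def tauSeq (σ : ℕ → ℝ) (ε : ℝ) : ℕ → ℝ
  | 0 => σ 0 - 2 * ε
  | n + 1 => (σ (n+1))^2 * tauSeq σ ε n / (1 + σ (n+1) * tauSeq σ ε n) - 2 * ε

lemma Fmono_t {s t1 t2 : ℝ} (hs : 0 < s) (h1 : 0 ≤ t1) (h12 : t1 ≤ t2) :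
    s^2 * t1 / (1 + s * t1) ≤ s^2 * t2 / (1 + s * t2) := by
  have d1 : 0 < 1 + s * t1 := by nlinarith
  have d2 : 0 < 1 + s * t2 := by nlinarith
  rw [div_le_div_iff₀ d1 d2]
  nlinarith

lemma Fmono_s {s1 s2 t : ℝ} (hs : 0 < s1) (h12 : s1 ≤ s2) (ht : 0 < t) :
    s1^2 * t / (1 + s1 * t) ≤ s2^2 * t / (1 + s2 * t) := by
  have d1 : 0 < 1 + s1 * t := by nlinarith
  have d2 : 0 < 1 + s2 * t := by nlinarith
  rw [div_le_div_iff₀ d1 d2]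
  nlinarith [mul_nonneg (mul_nonneg (mul_nonneg hs.le (hs.trans_le h12).le) (mul_pos ht ht).le) (sub_nonneg.2 h12),
    mul_nonneg (mul_nonneg (add_pos hs (hs.trans_le h12)).le ht.le) (sub_nonneg.2 h12)]

lemma Fhalf {s t : ℝ} (hs : 0 < s) (ht : 0 < t) :
    s^2 * t / (1 + s * t) / 2 < s^2 * (t/2) / (1 + s * (t/2)) := by
  have d1 : 0 < 1 + s * t := by nlinarith
  have d2 : 0 < 1 + s * (t/2) := by nlinarith
  rw [div_div, div_lt_div_iff₀ (by nlinarith) d2]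
  nlinarith [sq_nonneg s, mul_pos (mul_pos (mul_pos hs hs) ht) (mul_pos hs ht)]

set_option maxHeartbeats 1600000 in
/-- The set of x for which v_n(x) > 0 for all n ≥ 1 is a closed half-line
[x₊, ∞) with 1 ≤ x₊ < x₀. -/
theorem positivity_set_is_closed_halfline
    (q₀ α x₀ : ℝ) (hq1 : 1 / 2 < q₀) (hq2 : q₀ < 1)
    (hα1 : 1 - q₀ < α) (hα2 : α < q₀)
    (hx : x₀ = 1 / (2 * Real.sqrt (q₀ * (1 - q₀))))
    (σ : ℕ → ℝ)
    (hσ0 : σ 0 = 2 * x₀ * α) (hσ : ∀ n, σ (n + 1) = 2 * x₀ - 1 / σ n)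
    (v : ℝ → ℕ → ℝ)
    (hv0 : ∀ x, v x 0 = 0) (hv1 : ∀ x, v x 1 = 1)
    (hvr : ∀ x, ∀ n, 1 ≤ n →
      v x (n + 1) = (2 * x - σ (n + 1) + σ (n - 1)) * v x n - v x (n - 1)) :
    ∃ xs : ℝ, {x : ℝ | ∀ n, 1 ≤ n → 0 < v x n} = Set.Ici xs ∧
      1 ≤ xs ∧ xs < x₀ := by
  -- basic quantities
  have hq0 : 0 < q₀ := by linarith
  have h1q : 0 < 1 - q₀ := by linarith
  set r : ℝ := Real.sqrt (q₀ * (1 - q₀)) with hrdef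
  have hr : 0 < r := Real.sqrt_pos.2 (by positivity)
  have hr2 : r ^ 2 = q₀ * (1 - q₀) := Real.sq_sqrt (by positivity)
  set a : ℝ := (1 - q₀) / r with hadef
  set b : ℝ := q₀ / r with hbdef
  have hA : 0 < a := by positivity
  have hB : 0 < b := by positivity
  have hab : a * b = 1 := by
    rw [hadef, hbdef, div_mul_div_comm, ← sq, hr2, mul_comm (1-q₀) q₀]
    exact div_self (mul_pos hq0 h1q).ne'
  have haltb : a < b := by
    rw [hadef, hbdef]
    exact div_lt_div_of_pos_right (by linarith) hr
  have hsum : a + b = 2 * x₀ := by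
    rw [hx, hadef, hbdef]
    field_simp
    ring
  have ha1 : a < 1 := by nlinarith
  have hb1 : 1 < b := by nlinarith
  -- σ₀ between a and b
  have h2x : 2 * x₀ = 1 / r := by rw [hx]; ring
  have hσ0' : σ 0 = α / r := by rw [hσ0, h2x]; ring
  have hσ0a : a < σ 0 := by
    rw [hσ0', hadef]
    exact div_lt_div_of_pos_right hα1 hr
  have hσ0b : σ 0 < b := by
    rw [hσ0', hbdef]
    exact div_lt_div_of_pos_right hα2 hr
  -- one-step lemma for the σ recursion
  have hstep : ∀ t, a < t → t < b → a < 2 * x₀ - 1 / t ∧ 2 * x₀ - 1 / t < b ∧ t < 2 * x₀ - 1 / t := by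
    intro t hat htb
    have ht : 0 < t := hA.trans hat
    have h1t : 1 / t * t = 1 := by field_simp
    refine ⟨?_, ?_, ?_⟩ <;> nlinarith [mul_pos hA ht, mul_pos hB ht]
  -- σ bounds and monotonicity
  have hσmem : ∀ n, a < σ n ∧ σ n < b := by
    intro n
    induction n with
    | zero => exact ⟨hσ0a, hσ0b⟩
    | succ k ih =>
      rw [hσ k]
      exact ⟨(hstep _ ih.1 ih.2).1, (hstep _ ih.1 ih.2).2.1⟩
  have hσpos : ∀ n, 0 < σ n := fun n => hA.trans (hσmem n).1
  have hmono : ∀ n, σ n < σ (n + 1) := by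
    intro n; rw [hσ n]; exact (hstep _ (hσmem n).1 (hσmem n).2).2.2
  have hmono' : Monotone σ := monotone_nat_of_le_succ fun n => (hmono n).le
  have hinv : ∀ n, 1 / σ n = 2 * x₀ - σ (n + 1) := by
    intro n; rw [hσ n]; ring
  clear hσ0' h2x hσ0 hx hr2 hr
  clear_value a b
  -- continuity of x ↦ v x n
  have hcont : ∀ n, Continuous fun x => v x n := by
    have key : ∀ n, Continuous (fun x => v x n) ∧ Continuous (fun x => v x (n+1)) := by
      intro n
      induction n with
      | zero =>
        constructor
        · have : (fun x => v x 0) = fun _ => (0:ℝ) := funext hv0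
          rw [this]; exact continuous_const
        · have : (fun x => v x 1) = fun _ => (1:ℝ) := funext hv1
          rw [this]; exact continuous_const
      | succ k ih =>
        refine ⟨ih.2, ?_⟩
        have : (fun x => v x (k+1+1))
            = fun x => (2 * x - σ (k+1+1) + σ k) * v x (k+1) - v x k := by
          funext x
          rw [hvr x (k+1) (by omega)]
          simp
        rw [this]
        exact (((continuous_const.mul continuous_id').sub continuous_const |>.add
          continuous_const).mul ih.2).sub ih.1
    exact fun n => (key n).1
  -- the positivity set is upward closed
  have hup : ∀ x y : ℝ, x ≤ y → (∀ n, 1 ≤ n → 0 < v x n) → (∀ n, 1 ≤ n → 0 < v y n) := by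
    intro x y hxy hX
    have key : ∀ n, 1 ≤ n → v x n ≤ v y n ∧ v x (n+1) * v y n ≤ v y (n+1) * v x n := by
      intro n hn
      induction n, hn using Nat.le_induction with
      | base =>
        refine ⟨by rw [hv1, hv1], ?_⟩
        rw [hv1, hv1, mul_one, mul_one, hvr x 1 le_rfl, hvr y 1 le_rfl]
        simp [hv0, hv1]
        linarith
      | succ n hn ih =>
        obtain ⟨hle, hratio⟩ := ih
        have hxn : 0 < v x n := hX n hn
        have hxn1 : 0 < v x (n+1) := hX (n+1) (by omega)
        have hyn : 0 < v y n := lt_of_lt_of_le hxn hle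
        have hle1 : v x (n+1) ≤ v y (n+1) := by
          rw [← mul_le_mul_iff_of_pos_right hxn]
          calc v x (n+1) * v x n ≤ v x (n+1) * v y n := by nlinarith
            _ ≤ v y (n+1) * v x n := hratio
        have hyn1 : 0 < v y (n+1) := lt_of_lt_of_le hxn1 hle1
        refine ⟨hle1, ?_⟩
        have ex : v x (n+1+1) = (2 * x - σ (n+1+1) + σ n) * v x (n+1) - v x n := by
          have := hvr x (n+1) (by omega); simpa using this
        have ey : v y (n+1+1) = (2 * y - σ (n+1+1) + σ n) * v y (n+1) - v y n := by
          have := hvr y (n+1) (by omega); simpa using this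
        rw [ex, ey]
        have h1 : 0 ≤ (2*y - 2*x) * (v y (n+1) * v x (n+1)) :=
          mul_nonneg (by linarith) (mul_pos hyn1 hxn1).le
        nlinarith [h1]
    intro n hn
    exact lt_of_lt_of_le (hX n hn) (key n hn).1
  -- every x in the positivity set satisfies 1 ≤ x
  have hlb : ∀ x : ℝ, (∀ n, 1 ≤ n → 0 < v x n) → 1 ≤ x := by
    intro x hX
    by_contra hx1
    push_neg at hx1
    have hv2 : v x 2 = 2 * x - σ 2 + σ 0 := by
      have := hvr x 1 le_rfl; simpa [hv0, hv1] using this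
    have hσ20 : σ 0 < σ 2 := (hmono 0).trans (hmono 1)
    have hxpos : 0 < x := by
      by_contra hx0
      push_neg at hx0
      have := hX 2 (by omega)
      rw [hv2] at this
      linarith
    set R : ℕ → ℝ := fun n => v x (n+1) / v x n with hRdef
    have hRpos : ∀ n, 1 ≤ n → 0 < R n := fun n hn =>
      div_pos (hX (n+1) (by omega)) (hX n hn)
    have hR1 : R 1 = 2 * x - σ 2 + σ 0 := by
      rw [hRdef]; simp only; rw [hv1, hv2, div_one]
    have hR1pos : 0 < R 1 := hRpos 1 le_rfl
    set δ : ℝ := (1 - x^2) / R 1 with hδdef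
    have hδpos : 0 < δ := div_pos (by nlinarith) hR1pos
    have hRrec : ∀ n, 1 ≤ n → R (n+1) ≤ 2 * x - 1 / R n := by
      intro n hn
      have hvn : 0 < v x n := hX n hn
      have hvn1 : 0 < v x (n+1) := hX (n+1) (by omega)
      have ex : v x (n+1+1) = (2 * x - σ (n+1+1) + σ n) * v x (n+1) - v x n := by
        have := hvr x (n+1) (by omega); simpa using this
      have hcoef : 2 * x - σ (n+1+1) + σ n ≤ 2 * x := by
        have : σ n ≤ σ (n+1+1) := hmono' (by omega)
        linarith
      have : R (n+1) = (2 * x - σ (n+1+1) + σ n) - 1 / R n := by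
        rw [hRdef]; simp only
        rw [ex]
        field_simp
      rw [this]
      have : 1 / R n > 0 := by positivity
      linarith
    have hdesc : ∀ n : ℕ, R (n+1) ≤ R 1 - n * δ := by
      intro n
      induction n with
      | zero => simp
      | succ k ih =>
        have hk1 : (1:ℕ) ≤ k + 1 := by omega
        have hRk : 0 < R (k+1) := hRpos (k+1) hk1
        have hRklt : R (k+1) ≤ R 1 := le_trans ih (by push_cast; nlinarith [hδpos, Nat.cast_nonneg (α := ℝ) k])
        have h1 : R (k+1+1) ≤ 2 * x - 1 / R (k+1) := hRrec (k+1) hk1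
        have h2 : 2 * x - 1 / R (k+1) ≤ R (k+1) - (1 - x^2) / R (k+1) := by
          have e : (R (k+1) - (1 - x^2)/R (k+1)) - (2*x - 1/R (k+1))
              = (R (k+1) - x)^2 / R (k+1) := by
            field_simp
            ring
          have hnn : 0 ≤ (R (k+1) - x)^2 / R (k+1) := div_nonneg (sq_nonneg _) hRk.le
          linarith [e]
        have h3 : δ ≤ (1 - x^2) / R (k+1) :=
          div_le_div_of_nonneg_left (by nlinarith) hRk hRklt
        push_cast
        linarith [ih]
    obtain ⟨n, hn⟩ := exists_nat_gt (R 1 / δ)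
    have := hdesc n
    have hRn : 0 < R (n+1) := hRpos (n+1) (by omega)
    have : R 1 / δ * δ < n * δ := by
      exact mul_lt_mul_of_pos_right hn hδpos
    rw [div_mul_cancel₀ _ (ne_of_gt hδpos)] at this
    linarith
  -- a point s strictly between 1 and b is eventually reached by σ
  obtain ⟨s, hsdef⟩ : ∃ y : ℝ, y = (1 + b) / 2 := ⟨_, rfl⟩
  have hs1 : 1 < s := by rw [hsdef]; linarith
  have hsb : s < b := by rw [hsdef]; linarith
  have hNex : ∃ N, s ≤ σ N := by
    by_contra hcon
    push_neg at hcon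
    set δ' : ℝ := (σ 0 - a) * (b - s) / b with hδ'def
    have hδ'pos : 0 < δ' := div_pos (mul_pos (by linarith) (by linarith)) hB
    have grow : ∀ n : ℕ, σ 0 + n * δ' ≤ σ n := by
      intro n
      induction n with
      | zero => simp
      | succ k ih =>
        have hσk := hσpos k
        have h0k : σ 0 ≤ σ k := hmono' (Nat.zero_le k)
        have hks : σ k < s := hcon k
        have hka : a < σ k := (hσmem k).1
        have hkb : σ k < b := (hσmem k).2
        have t1 : (σ 0 - a) * (b - s) ≤ (σ k - a) * (b - σ k) :=
          mul_le_mul (by linarith) (by linarith) (by linarith) (by linarith)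
        have t0 : δ' * b = (σ 0 - a) * (b - s) := by
          rw [hδ'def, div_mul_cancel₀ _ (ne_of_gt hB)]
        have key : δ' * σ k ≤ (σ k - a) * (b - σ k) := by
          have hδ'σ : δ' * σ k ≤ δ' * b :=
            mul_le_mul_of_nonneg_left hkb.le hδ'pos.le
          linarith
        have e : σ (k+1) - σ k - δ' = ((σ k - a) * (b - σ k) - δ' * σ k) / σ k := by
          rw [hσ k, ← hsum]
          field_simp
          linear_combination hab
        have hnum : 0 ≤ ((σ k - a) * (b - σ k) - δ' * σ k) / σ k :=
          div_nonneg (by linarith) hσk.le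
        push_cast
        linarith
    obtain ⟨n, hn⟩ := exists_nat_gt ((s - σ 0) / δ')
    have h1 := grow n
    have h2 : (s - σ 0) / δ' * δ' < n * δ' := mul_lt_mul_of_pos_right hn hδ'pos
    rw [div_mul_cancel₀ _ (ne_of_gt hδ'pos)] at h2
    have := hcon n
    linarith
  obtain ⟨N, hsN⟩ := hNex
  -- the unperturbed slack sequence Y
  have hY0 : tauSeq σ 0 0 = σ 0 := by simp [tauSeq]
  have hYrec : ∀ k, tauSeq σ 0 (k+1)
      = (σ (k+1))^2 * tauSeq σ 0 k / (1 + σ (k+1) * tauSeq σ 0 k) := by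
    intro k; rw [tauSeq]; ring
  have hYpos : ∀ k, 0 < tauSeq σ 0 k := by
    intro k
    induction k with
    | zero => rw [hY0]; exact hσpos 0
    | succ j ih =>
      rw [hYrec]
      have := hσpos (j+1)
      exact div_pos (by positivity) (by positivity)
  -- Lemma A : on any finite range, the perturbed slack stays above half the
  -- unperturbed one for small ε
  have lemA : ∀ M : ℕ, ∃ ε' : ℝ, 0 < ε' ∧ ∀ ε : ℝ, 0 < ε → ε ≤ ε' →
      ∀ k ≤ M, tauSeq σ 0 k / 2 ≤ tauSeq σ ε k := by
    intro M
    induction M with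
    | zero =>
      refine ⟨σ 0 / 4, div_pos (hσpos 0) (by norm_num), fun ε hε hε' k hk => ?_⟩
      interval_cases k
      have h0 : tauSeq σ ε 0 = σ 0 - 2*ε := rfl
      rw [hY0, h0]
      linarith
    | succ M ih =>
      obtain ⟨ε1, hε1, h1⟩ := ih
      obtain ⟨c, hcdef⟩ : ∃ y : ℝ, y = (σ (M+1))^2 * (tauSeq σ 0 M / 2)
          / (1 + σ (M+1) * (tauSeq σ 0 M / 2)) - tauSeq σ 0 (M+1) / 2 := ⟨_, rfl⟩
      have hc : 0 < c := by
        have := Fhalf (hσpos (M+1)) (hYpos M)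
        rw [← hYrec M] at this
        rw [hcdef]
        linarith
      refine ⟨min ε1 (c/2), lt_min hε1 (by linarith), fun ε hε hεle k hk => ?_⟩
      by_cases hkM : k ≤ M
      · exact h1 ε hε (hεle.trans (min_le_left _ _)) k hkM
      · have hk1 : k = M + 1 := by omega
        subst hk1
        have hTM : tauSeq σ 0 M / 2 ≤ tauSeq σ ε M :=
          h1 ε hε (hεle.trans (min_le_left _ _)) M le_rfl
        have hmon := Fmono_t (hσpos (M+1)) (by linarith [hYpos M]) hTM
        have hε2 : 2 * ε ≤ c := by
          have := hεle.trans (min_le_right _ _)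
          linarith
        have hunfold : tauSeq σ ε (M+1)
            = (σ (M+1))^2 * tauSeq σ ε M / (1 + σ (M+1) * tauSeq σ ε M) - 2*ε := rfl
        rw [hunfold]
        have : tauSeq σ 0 (M+1) / 2 + c
            = (σ (M+1))^2 * (tauSeq σ 0 M / 2) / (1 + σ (M+1) * (tauSeq σ 0 M / 2)) := by
          rw [hcdef]; ring
        linarith
  obtain ⟨ε1, hε1pos, hA1⟩ := lemA N
  -- the tail threshold and choice of ε
  have hs2 : 1 < s^2 := by
    have : 0 < (s - 1) * (s + 1) := mul_pos (by linarith) (by linarith)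
    nlinarith [this]
  obtain ⟨m, hmdef⟩ : ∃ y : ℝ, y = min (tauSeq σ 0 N / 2) ((s^2 - 1) / (2*s)) := ⟨_, rfl⟩
  have hm : 0 < m := by
    rw [hmdef]
    exact lt_min (by linarith [hYpos N]) (div_pos (by linarith) (by linarith))
  obtain ⟨ε₀, hε₀def⟩ : ∃ y : ℝ, y = m * (s^2 - 1) / (2 * (s^2 + 1)) := ⟨_, rfl⟩
  have hε₀pos : 0 < ε₀ := by
    rw [hε₀def]
    exact div_pos (mul_pos hm (by linarith)) (by positivity)
  obtain ⟨ε, hεdef⟩ : ∃ y : ℝ, y = min ε1 ε₀ := ⟨_, rfl⟩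
  have hεpos : 0 < ε := by rw [hεdef]; exact lt_min hε1pos hε₀pos
  have hεle1 : ε ≤ ε1 := by rw [hεdef]; exact min_le_left _ _
  have hεle0 : ε ≤ ε₀ := by rw [hεdef]; exact min_le_right _ _
  -- tail step
  have tailstep : ∀ s' t : ℝ, s ≤ s' → s' ≤ b → m ≤ t →
      m ≤ s'^2 * t / (1 + s' * t) - 2*ε := by
    intro s' t hss' hs'b hmt
    have hspos : 0 < s := by linarith
    have ht : 0 < t := lt_of_lt_of_le hm hmt
    have hchain1 : s^2 * m / (1 + s*m) ≤ s'^2 * m / (1 + s'*m) := Fmono_s hspos hss' hm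
    have hchain2 : s'^2 * m / (1 + s'*m) ≤ s'^2 * t / (1 + s'*t) :=
      Fmono_t (by linarith) hm.le hmt
    have hsm : s * m ≤ (s^2 - 1)/2 := by
      have h' : m ≤ (s^2-1)/(2*s) := by rw [hmdef]; exact min_le_right _ _
      have h'' := mul_le_mul_of_nonneg_left h' (by linarith : (0:ℝ) ≤ s)
      have e' : s * ((s^2-1)/(2*s)) = (s^2-1)/2 := by
        field_simp
      linarith
    have e : s^2*m/(1+s*m) - m = (s^2*m - m*(1+s*m))/(1+s*m) := by
      field_simp
    have goal0 : m*(s^2-1)*(1+s*m) ≤ (s^2*m - m*(1+s*m))*(s^2+1) := by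
      have diff : (s^2*m - m*(1+s*m))*(s^2+1) - m*(s^2-1)*(1+s*m)
          = m*s^2*(s^2 - 1 - 2*(s*m)) := by ring
      have hnn : 0 ≤ m*s^2*(s^2 - 1 - 2*(s*m)) :=
        mul_nonneg (mul_nonneg hm.le (sq_nonneg s)) (by linarith)
      linarith
    have key0 : m*(s^2-1)/(s^2+1) ≤ s^2*m/(1+s*m) - m := by
      rw [e, div_le_div_iff₀ (by nlinarith) (by nlinarith)]
      exact goal0
    have h2ε : 2*ε ≤ m*(s^2-1)/(s^2+1) := by
      have : 2*ε₀ = m*(s^2-1)/(s^2+1) := by rw [hε₀def]; field_simp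
      linarith
    linarith
  -- positivity of the perturbed slack
  have hTfin : ∀ k ≤ N, tauSeq σ 0 k / 2 ≤ tauSeq σ ε k := hA1 ε hεpos hεle1
  have hTtail : ∀ k, N ≤ k → m ≤ tauSeq σ ε k := by
    intro k hk
    induction k, hk using Nat.le_induction with
    | base =>
      refine le_trans ?_ (hTfin N le_rfl)
      rw [hmdef]
      exact min_le_left _ _
    | succ k hk ih =>
      rw [tauSeq]
      have hs' : s ≤ σ (k+1) := hsN.trans (hmono' (by omega))
      exact tailstep (σ (k+1)) (tauSeq σ ε k) hs' (hσmem (k+1)).2.le ih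
  have hTpos : ∀ k, 0 < tauSeq σ ε k := by
    intro k
    rcases le_or_gt k N with h | h
    · exact lt_of_lt_of_le (by linarith [hYpos k]) (hTfin k h)
    · exact lt_of_lt_of_le hm (hTtail k h.le)
  -- x₀ - ε is in the positivity set
  obtain ⟨xe, hxedef⟩ : ∃ y : ℝ, y = x₀ - ε := ⟨_, rfl⟩
  have hmem : ∀ n, 1 ≤ n →
      0 < v xe n ∧ (1/σ n + tauSeq σ ε (n-1)) * v xe n ≤ v xe (n+1) := by
    intro n hn
    induction n, hn using Nat.le_induction with
    | base =>
      refine ⟨by rw [hv1]; norm_num, ?_⟩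
      have hv2 : v xe 2 = 2 * xe - σ 2 + σ 0 := by
        have := hvr xe 1 le_rfl; simpa [hv0, hv1] using this
      have hT0 : tauSeq σ ε 0 = σ 0 - 2*ε := by simp [tauSeq]
      have hi1 : 1/σ 1 = 2*x₀ - σ 2 := hinv 1
      rw [hv1, hv2, hT0, hi1, hxedef]
      ring_nf
      linarith
    | succ n hn ih =>
      obtain ⟨h1, h2⟩ := ih
      have hσn : 0 < σ n := hσpos n
      have hT1 : 0 < tauSeq σ ε (n-1) := hTpos (n-1)
      have hpos1 : 0 < v xe (n+1) :=
        lt_of_lt_of_le (mul_pos (by positivity) h1) h2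
      refine ⟨hpos1, ?_⟩
      obtain ⟨j, rfl⟩ : ∃ j, n = j + 1 := ⟨n - 1, by omega⟩
      simp only [Nat.add_sub_cancel] at h2 ⊢
      obtain ⟨S, hSdef⟩ : ∃ y : ℝ, y = σ (j+1) := ⟨_, rfl⟩
      obtain ⟨t, htdef⟩ : ∃ y : ℝ, y = tauSeq σ ε j := ⟨_, rfl⟩
      have hS : 0 < S := hSdef ▸ hσpos (j+1)
      have ht : 0 < t := htdef ▸ hTpos j
      rw [← hSdef, ← htdef] at h2
      have hD : 0 < 1 + S * t := by positivity
      have ex : v xe (j+1+1+1)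
          = (2 * xe - σ (j+1+1+1) + σ (j+1)) * v xe (j+1+1) - v xe (j+1) := by
        have := hvr xe (j+2) (by omega); simpa using this
      have hTj1 : tauSeq σ ε (j+1) = S^2 * t / (1 + S*t) - 2*ε := by
        rw [hSdef, htdef]
        rfl
      have e1 : σ (j+1) - 2*ε - tauSeq σ ε (j+1) = S / (1 + S*t) := by
        rw [hTj1, hSdef]
        field_simp
        ring
      have h5 : (1 + S*t)/S * v xe (j+1) ≤ v xe (j+1+1) := by
        have e2 : (1 + S*t)/S = 1/S + t := by field_simp
        rw [e2]
        exact h2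
      have h6 : v xe (j+1) ≤ S/(1 + S*t) * v xe (j+1+1) := by
        have h5' := mul_le_mul_of_nonneg_left h5 (le_of_lt (show 0 < S/(1+S*t) by positivity))
        have e3 : S/(1+S*t) * ((1 + S*t)/S * v xe (j+1)) = v xe (j+1) := by
          field_simp
        rw [e3] at h5'
        exact h5'
      have h7 : v xe (j+1) ≤ (σ (j+1) - 2*ε - tauSeq σ ε (j+1)) * v xe (j+1+1) := by
        rw [e1]; exact h6
      have e4 : 2 * xe - σ (j+1+1+1) = 1/σ (j+1+1) - 2*ε := by
        rw [hinv (j+1+1), hxedef]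
        try ring
      rw [ex]
      have e5 : (2 * xe - σ (j+1+1+1) + σ (j+1)) = 1/σ (j+1+1) - 2*ε + σ (j+1) := by
        rw [← e4]
        try ring
      rw [e5]
      have expand : (1/σ (j+1+1) - 2*ε + σ (j+1)) * v xe (j+1+1) - v xe (j+1)
          - (1/σ (j+1+1) + tauSeq σ ε (j+1)) * v xe (j+1+1)
          = (σ (j+1) - 2*ε - tauSeq σ ε (j+1)) * v xe (j+1+1) - v xe (j+1) := by ring
      linarith [h7, expand]
  -- final assembly
  have hXmem : xe ∈ {x : ℝ | ∀ n, 1 ≤ n → 0 < v x n} := fun n hn => (hmem n hn).1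
  have hXcl : IsClosed {x : ℝ | ∀ n, 1 ≤ n → 0 < v x n} := by
    have hXeq : {x : ℝ | ∀ n, 1 ≤ n → 0 < v x n} = ⋂ n : ℕ, {x : ℝ | 0 ≤ v x (n+1)} := by
      ext x
      simp only [Set.mem_iInter, Set.mem_setOf_eq]
      constructor
      · exact fun h n => (h (n+1) (by omega)).le
      · intro h n hn
        have pos : ∀ k : ℕ, 0 < v x (k+1) := by
          intro k
          induction k using Nat.strong_induction_on with
          | _ k ih =>
            rcases Nat.eq_zero_or_pos k with rfl | hk
            · rw [hv1]; norm_num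
            · by_contra hnp
              have h0 : v x (k+1) = 0 := le_antisymm (not_lt.1 hnp) (h k)
              have ex : v x (k+1+1) = (2*x - σ (k+1+1) + σ k) * v x (k+1) - v x k := by
                have := hvr x (k+1) (by omega); simpa using this
              obtain ⟨j, rfl⟩ : ∃ j, k = j + 1 := ⟨k - 1, by omega⟩
              have hvk : 0 < v x (j+1) := ih j (by omega)
              rw [h0] at ex
              have := h (j+1+1)
              rw [ex] at this
              linarith
        obtain ⟨j, rfl⟩ : ∃ j, n = j + 1 := ⟨n - 1, by omega⟩
        exact pos j
    rw [hXeq]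
    exact isClosed_iInter fun n => isClosed_le continuous_const (hcont (n+1))
  have hne : Set.Nonempty {x : ℝ | ∀ n, 1 ≤ n → 0 < v x n} := ⟨xe, hXmem⟩
  have hbdd : BddBelow {x : ℝ | ∀ n, 1 ≤ n → 0 < v x n} := ⟨1, fun x hx => hlb x hx⟩
  refine ⟨sInf {x : ℝ | ∀ n, 1 ≤ n → 0 < v x n}, ?_, ?_, ?_⟩
  · have hxsX := IsClosed.csInf_mem hXcl hne hbdd
    ext x
    simp only [Set.mem_Ici]
    constructor
    · exact fun hx => csInf_le hbdd hx
    · intro hx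
      exact hup _ x hx hxsX
  · exact le_csInf hne (fun x hx => hlb x hx)
  · calc sInf {x : ℝ | ∀ n, 1 ≤ n → 0 < v x n} ≤ xe := csInf_le hbdd hXmem
      _ < x₀ := by rw [hxedef]; linarith
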